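/- If X is a strongly star-Lindelöf space and X is the union of fewer than 𝔟 many Hurewicz subspaces, then X is strongly star-Hurewicz. -/

import Mathlib

open Set Filter Topology

/-- `𝒰` is an open cover of the space `X`. -/
def IsOpenCover {X : Type} [TopologicalSpace X] (𝒰 : Set (Set X)) : Prop :=
  (∀ u ∈ 𝒰, IsOpen u) ∧ ⋃₀ 𝒰 = Set.univ

/-- The star of a set `A` with respect to a collection `𝒰`. -/
def st {X : Type} (A : Set X) (𝒰 : Set (Set X)) : Set X :=
  ⋃₀ {u ∈ 𝒰 | (u ∩ A).Nonempty}
/-- Eventual domination `f ≤* g`. -/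
def EvLE (f g : ℕ → ℕ) : Prop := ∀ᶠ n in Filter.atTop, f n ≤ g n

/-- The dominating number `𝔡`. -/
noncomputable def dominatingNumber : Cardinal :=
  sInf {c | ∃ D : Set (ℕ → ℕ),
    (∀ g : ℕ → ℕ, ∃ f ∈ D, EvLE g f) ∧ Cardinal.mk D = c}

/-- The bounding number `𝔟`. -/
noncomputable def boundingNumber : Cardinal :=
  sInf {c | ∃ B : Set (ℕ → ℕ),
    (¬ ∃ g : ℕ → ℕ, ∀ f ∈ B, EvLE f g) ∧ Cardinal.mk B = c}
/-- The Menger property `S_fin(𝒪,𝒪)`. -/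
def MengerSpace (X : Type) [TopologicalSpace X] : Prop :=
  ∀ 𝒰 : ℕ → Set (Set X), (∀ n, IsOpenCover (𝒰 n)) →
    ∃ 𝒱 : ℕ → Set (Set X), (∀ n, (𝒱 n).Finite ∧ 𝒱 n ⊆ 𝒰 n) ∧
      ∀ x : X, ∃ n, x ∈ ⋃₀ 𝒱 n

/-- The Hurewicz property. -/
def HurewiczSpace (X : Type) [TopologicalSpace X] : Prop :=
  ∀ 𝒰 : ℕ → Set (Set X), (∀ n, IsOpenCover (𝒰 n)) →
    ∃ 𝒱 : ℕ → Set (Set X), (∀ n, (𝒱 n).Finite ∧ 𝒱 n ⊆ 𝒰 n) ∧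
      ∀ x : X, ∀ᶠ n in Filter.atTop, x ∈ ⋃₀ 𝒱 n

/-- The star-Menger property. -/
def StarMengerSpace (X : Type) [TopologicalSpace X] : Prop :=
  ∀ 𝒰 : ℕ → Set (Set X), (∀ n, IsOpenCover (𝒰 n)) →
    ∃ 𝒱 : ℕ → Set (Set X), (∀ n, (𝒱 n).Finite ∧ 𝒱 n ⊆ 𝒰 n) ∧
      ∀ x : X, ∃ n, x ∈ st (⋃₀ 𝒱 n) (𝒰 n)

/-- The star-Hurewicz property. -/
def StarHurewiczSpace (X : Type) [TopologicalSpace X] : Prop :=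
  ∀ 𝒰 : ℕ → Set (Set X), (∀ n, IsOpenCover (𝒰 n)) →
    ∃ 𝒱 : ℕ → Set (Set X), (∀ n, (𝒱 n).Finite ∧ 𝒱 n ⊆ 𝒰 n) ∧
      ∀ x : X, ∀ᶠ n in Filter.atTop, x ∈ st (⋃₀ 𝒱 n) (𝒰 n)

/-- The strongly star-Menger property. -/
def StronglyStarMengerSpace (X : Type) [TopologicalSpace X] : Prop :=
  ∀ 𝒰 : ℕ → Set (Set X), (∀ n, IsOpenCover (𝒰 n)) →
    ∃ F : ℕ → Set X, (∀ n, (F n).Finite) ∧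
      ∀ x : X, ∃ n, x ∈ st (F n) (𝒰 n)

/-- The strongly star-Hurewicz property. -/
def StronglyStarHurewiczSpace (X : Type) [TopologicalSpace X] : Prop :=
  ∀ 𝒰 : ℕ → Set (Set X), (∀ n, IsOpenCover (𝒰 n)) →
    ∃ F : ℕ → Set X, (∀ n, (F n).Finite) ∧
      ∀ x : X, ∀ᶠ n in Filter.atTop, x ∈ st (F n) (𝒰 n)

/-- The star-Lindelöf property. -/
def StarLindelofSpace (X : Type) [TopologicalSpace X] : Prop :=
  ∀ 𝒰 : Set (Set X), IsOpenCover 𝒰 →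
    ∃ 𝒱 ⊆ 𝒰, 𝒱.Countable ∧ st (⋃₀ 𝒱) 𝒰 = Set.univ

/-- The strongly star-Lindelöf property. -/
def StronglyStarLindelofSpace (X : Type) [TopologicalSpace X] : Prop :=
  ∀ 𝒰 : Set (Set X), IsOpenCover 𝒰 →
    ∃ C : Set X, C.Countable ∧ st C 𝒰 = Set.univ

lemma exists_bound {α : Type*} (h : ℕ → Set α) (hmono : Monotone h)
    (S : Set (Set α)) (hS : S.Finite) (hsub : ∀ s ∈ S, ∃ k, s ⊆ h k) :
    ∃ m, ⋃₀ S ⊆ h m := by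
  refine Set.Finite.induction_on
    (motive := fun S _ => (∀ s ∈ S, ∃ k, s ⊆ h k) → ∃ m, ⋃₀ S ⊆ h m)
    S hS (fun _ => ⟨0, by simp⟩) ?_ hsub
  intro a s _ _ ih hsub'
  obtain ⟨m, hm⟩ := ih (fun t ht => hsub' t (Set.mem_insert_of_mem _ ht))
  obtain ⟨k, hk⟩ := hsub' a (Set.mem_insert _ _)
  refine ⟨max m k, ?_⟩
  rw [Set.sUnion_insert]
  exact Set.union_subset (hk.trans (hmono (le_max_right _ _)))
    (hm.trans (hmono (le_max_left _ _)))

theorem stmt (X : Type) [TopologicalSpace X] (hX : StronglyStarLindelofSpace X)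
    (ι : Type) (Y : ι → Set X)
    (hcard : Cardinal.mk ι < boundingNumber)
    (hY : ∀ i, HurewiczSpace (Y i))
    (hcover : ⋃ i, Y i = Set.univ) :
    StronglyStarHurewiczSpace X := by

  intro 𝒰 h𝒰
  cases isEmpty_or_nonempty X with
  | inl hempty =>
    exact ⟨fun _ => ∅, fun _ => Set.finite_empty, fun x => (hempty.false x).elim⟩
  | inr hne =>
  choose C hCc hCst using fun n => hX (𝒰 n) (h𝒰 n)
  have hCne : ∀ n, (C n).Nonempty := by
    intro n
    obtain ⟨x⟩ := hne
    have hx : x ∈ st (C n) (𝒰 n) := (hCst n).symm ▸ Set.mem_univ x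
    simp only [st, Set.mem_sUnion, Set.mem_sep_iff] at hx
    obtain ⟨u, ⟨hu𝒰, y, hyu, hyC⟩, hxu⟩ := hx
    exact ⟨y, hyC⟩
  choose c hc using fun n => (hCc n).exists_eq_range (hCne n)
  set W : ℕ → ℕ → Set X := fun n k => ⋃ j ∈ Set.Iic k, st {c n j} (𝒰 n) with hWdef
  have hstopen : ∀ n (A : Set X), IsOpen (st A (𝒰 n)) := fun n A =>
    isOpen_sUnion (fun u hu => (h𝒰 n).1 u hu.1)
  have hWopen : ∀ n k, IsOpen (W n k) := fun n k =>
    isOpen_biUnion fun j _ => hstopen n _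
  have hWmono : ∀ n, Monotone (W n) := fun n k k' hkk' =>
    Set.biUnion_subset_biUnion_left (Set.Iic_subset_Iic.2 hkk')
  have hWcov : ∀ n (x : X), ∃ k, x ∈ W n k := by
    intro n x
    have hx : x ∈ st (C n) (𝒰 n) := (hCst n).symm ▸ Set.mem_univ x
    simp only [st, Set.mem_sUnion, Set.mem_sep_iff] at hx
    obtain ⟨u, ⟨hu𝒰, y, hyu, hyC⟩, hxu⟩ := hx
    rw [hc n] at hyC
    obtain ⟨j, rfl⟩ := hyC
    refine ⟨j, Set.mem_biUnion (Set.mem_Iic.2 le_rfl) ?_⟩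
    exact ⟨u, ⟨hu𝒰, c n j, hyu, rfl⟩, hxu⟩
  have key : ∀ i : ι, ∃ f : ℕ → ℕ,
      ∀ y : Y i, ∀ᶠ n in Filter.atTop, (y : X) ∈ W n (f n) := by
    intro i
    have hOC : ∀ n, IsOpenCover
        (Set.range (fun k => (Subtype.val : Y i → X) ⁻¹' W n k)) := by
      intro n
      constructor
      · rintro u ⟨k, rfl⟩
        exact (hWopen n k).preimage continuous_subtype_val
      · rw [Set.eq_univ_iff_forall]
        intro y
        obtain ⟨k, hk⟩ := hWcov n (y : X)
        exact ⟨_, ⟨k, rfl⟩, hk⟩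
    obtain ⟨𝒱, h𝒱, hy𝒱⟩ := hY i
      (fun n => Set.range (fun k => (Subtype.val : Y i → X) ⁻¹' W n k)) hOC
    have hbd : ∀ n, ∃ m, ⋃₀ 𝒱 n ⊆ (Subtype.val : Y i → X) ⁻¹' W n m := by
      intro n
      refine exists_bound _ (fun a b hab => Set.preimage_mono (hWmono n hab))
        (𝒱 n) ((h𝒱 n).1) ?_
      intro s hs
      obtain ⟨k, rfl⟩ := (h𝒱 n).2 hs
      exact ⟨k, subset_rfl⟩
    choose f hf using hbd
    refine ⟨f, fun y => ?_⟩
    filter_upwards [hy𝒱 y] with n hn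
    exact hf n hn
  choose f hf using key
  have hbdd : ∃ g : ℕ → ℕ, ∀ i, EvLE (f i) g := by
    by_contra hcon
    push_neg at hcon
    have hmem : Cardinal.mk ↥(Set.range f) ∈ {c | ∃ B : Set (ℕ → ℕ),
        (¬ ∃ g : ℕ → ℕ, ∀ h ∈ B, EvLE h g) ∧ Cardinal.mk B = c} := by
      refine ⟨Set.range f, ?_, rfl⟩
      rintro ⟨g, hg⟩
      obtain ⟨i, hi⟩ := hcon g
      exact hi (hg (f i) ⟨i, rfl⟩)
    have h1 : boundingNumber ≤ Cardinal.mk ↥(Set.range f) := csInf_le' hmem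
    exact absurd hcard (not_lt.2 (h1.trans Cardinal.mk_range_le))
  obtain ⟨g, hg⟩ := hbdd
  refine ⟨fun n => c n '' Set.Iic (g n), fun n => (Set.finite_Iic _).image _, ?_⟩
  intro x
  have hx : x ∈ ⋃ i, Y i := hcover.symm ▸ Set.mem_univ x
  obtain ⟨i, hi⟩ := Set.mem_iUnion.1 hx
  filter_upwards [hf i ⟨x, hi⟩, hg i] with n h1 h2
  have hxW : x ∈ W n (g n) := hWmono n h2 h1
  simp only [hWdef, Set.mem_iUnion, Set.mem_Iic] at hxW
  obtain ⟨j, hj, hxj⟩ := hxW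
  simp only [st, Set.mem_sUnion, Set.mem_sep_iff] at hxj ⊢
  obtain ⟨u, ⟨hu𝒰, y, hyu, hyc⟩, hxu⟩ := hxj
  rw [Set.mem_singleton_iff] at hyc
  subst hyc
  exact ⟨u, ⟨hu𝒰, c n j, hyu, Set.mem_image_of_mem _ hj⟩, hxu⟩
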